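/- Hölder-1/2 stability of the backward hitting time under orthogonal spatial shifts: suppose x, x̃ both lie in the annulus with (x − x̃)_p · v_p = 0, x̃_{ver} = x_{ver}, and both backward trajectories hit the inner circle of radius r (with the square roots below well-defined). Then |v|_p² |t_b(x,v) − t_b(x̃,v)| ≤ C |v|_p |x − x̃|^{1/2} for a constant C depending only on r, R. -/

import Mathlib

/-- planar norm of a vector in ℝ³ -/
noncomputable def normp (y : ℝ × ℝ × ℝ) : ℝ := Real.sqrt (y.1 ^ 2 + y.2.1 ^ 2)

/-- planar dot product of vectors in ℝ³ -/
def dotp (y w : ℝ × ℝ × ℝ) : ℝ := y.1 * w.1 + y.2.1 * w.2.1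

/-- full Euclidean norm on ℝ³ -/
noncomputable def enorm3 (y : ℝ × ℝ × ℝ) : ℝ :=
  Real.sqrt (y.1 ^ 2 + y.2.1 ^ 2 + y.2.2 ^ 2)

/-- backward hitting time of the inner circle of radius r, explicit formula -/
noncomputable def tbval (r : ℝ) (x v : ℝ × ℝ × ℝ) : ℝ :=
  (dotp x v - Real.sqrt (dotp x v ^ 2 - normp v ^ 2 * (normp x ^ 2 - r ^ 2)))
    / normp v ^ 2

/-- Hölder-1/2 stability of the backward hitting time under spatial shifts
orthogonal to the velocity: if `x, x̃` lie in the annulus, `(x − x̃)_p ⊥ v_p`,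
`x̃_ver = x_ver`, and both square roots are well-defined, then
`|v|_p² |t_b(x,v) − t_b(x̃,v)| ≤ C |v|_p |x − x̃|^{1/2}` with `C = C(r,R)`. -/
lemma abs_sqrt_sub_sqrt_le (A B : ℝ) (hA : 0 ≤ A) (hB : 0 ≤ B) :
    |Real.sqrt A - Real.sqrt B| ≤ Real.sqrt |A - B| := by
  wlog h : B ≤ A generalizing A B
  · rw [abs_sub_comm, abs_sub_comm A B]; exact this B A hB hA (le_of_not_ge h)
  have hs : Real.sqrt B ≤ Real.sqrt A := Real.sqrt_le_sqrt h
  rw [abs_of_nonneg (sub_nonneg.2 hs), abs_of_nonneg (sub_nonneg.2 h)]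
  have key : Real.sqrt A ≤ Real.sqrt (A - B) + Real.sqrt B := by
    have h1 : A ≤ (Real.sqrt (A - B) + Real.sqrt B) ^ 2 := by
      have e1 := Real.sq_sqrt (sub_nonneg.2 h)
      have e2 := Real.sq_sqrt hB
      have p := mul_nonneg (Real.sqrt_nonneg (A - B)) (Real.sqrt_nonneg B)
      nlinarith
    calc Real.sqrt A ≤ Real.sqrt ((Real.sqrt (A - B) + Real.sqrt B) ^ 2) :=
          Real.sqrt_le_sqrt h1
      _ = Real.sqrt (A - B) + Real.sqrt B := Real.sqrt_sq (by positivity)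
  linarith

set_option maxHeartbeats 1000000 in
theorem stmt_13 (r R : ℝ) (hr : 0 < r) (hrR : r < R) :
    ∃ C > 0, ∀ x y v : ℝ × ℝ × ℝ,
      r < normp x → normp x < R → r < normp y → normp y < R →
      dotp (x - y) v = 0 → x.2.2 = y.2.2 →
      normp v ^ 2 * (normp x ^ 2 - r ^ 2) ≤ dotp x v ^ 2 →
      normp v ^ 2 * (normp y ^ 2 - r ^ 2) ≤ dotp y v ^ 2 →
      normp v ^ 2 * |tbval r x v - tbval r y v|
        ≤ C * normp v * Real.sqrt (enorm3 (x - y)) := by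
  refine ⟨Real.sqrt (2 * R) + 1, by positivity, ?_⟩
  intro x y v hxr hxR hyr hyR horth hver hDx hDy
  have hnvx : 0 ≤ normp v := Real.sqrt_nonneg _
  have hnx : 0 ≤ normp x := Real.sqrt_nonneg _
  have hny : 0 ≤ normp y := Real.sqrt_nonneg _
  have hd : dotp x v = dotp y v := by
    have : dotp (x - y) v = dotp x v - dotp y v := by
      simp [dotp, Prod.fst_sub, Prod.snd_sub]; ring
    rw [this] at horth; linarith
  -- enorm3 (x-y) = normp (x-y)
  have hzz : (x - y).2.2 = 0 := by
    simp [Prod.snd_sub, hver]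
  have hee : enorm3 (x - y) = normp (x - y) := by
    rw [enorm3, normp, hzz]; ring_nf
  set e := enorm3 (x - y) with he
  have he0 : 0 ≤ e := Real.sqrt_nonneg _
  -- bound on |normp x ^2 - normp y ^2|
  have hx2 : normp x ^ 2 = x.1 ^ 2 + x.2.1 ^ 2 := Real.sq_sqrt (by positivity)
  have hy2 : normp y ^ 2 = y.1 ^ 2 + y.2.1 ^ 2 := Real.sq_sqrt (by positivity)
  have he2 : e ^ 2 = (x.1 - y.1) ^ 2 + (x.2.1 - y.2.1) ^ 2 := by
    rw [hee, normp]
    simp only [Prod.fst_sub, Prod.snd_sub]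
    exact Real.sq_sqrt (by positivity)
  have hxR2 : normp x ^ 2 < R ^ 2 := by nlinarith
  have hyR2 : normp y ^ 2 < R ^ 2 := by nlinarith
  have hkey : |normp x ^ 2 - normp y ^ 2| ≤ 2 * R * e := by
    have hcs : (normp x ^ 2 - normp y ^ 2) ^ 2
        ≤ ((x.1 + y.1) ^ 2 + (x.2.1 + y.2.1) ^ 2) * e ^ 2 := by
      rw [hx2, hy2, he2]
      nlinarith [sq_nonneg ((x.1 + y.1) * (x.2.1 - y.2.1) - (x.2.1 + y.2.1) * (x.1 - y.1))]
    have hsum : (x.1 + y.1) ^ 2 + (x.2.1 + y.2.1) ^ 2 ≤ 4 * R ^ 2 := by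
      nlinarith [sq_nonneg (x.1 - y.1), sq_nonneg (x.2.1 - y.2.1)]
    have hsq : (normp x ^ 2 - normp y ^ 2) ^ 2 ≤ (2 * R * e) ^ 2 := by
      have h2 : ((x.1 + y.1) ^ 2 + (x.2.1 + y.2.1) ^ 2) * e ^ 2 ≤ 4 * R ^ 2 * e ^ 2 :=
        mul_le_mul_of_nonneg_right hsum (by positivity)
      nlinarith
    have h2Re : 0 ≤ 2 * R * e := mul_nonneg (by linarith : (0:ℝ) ≤ 2 * R) he0
    exact abs_le.2 (abs_le_of_sq_le_sq' hsq h2Re)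
  by_cases hv : normp v = 0
  · rw [hv]; simp
  · have hvpos : 0 < normp v := lt_of_le_of_ne hnvx (Ne.symm hv)
    have hV : (normp v ^ 2) ≠ 0 := pow_ne_zero 2 hv
    set Dx := dotp x v ^ 2 - normp v ^ 2 * (normp x ^ 2 - r ^ 2) with hDxdef
    set Dy := dotp y v ^ 2 - normp v ^ 2 * (normp y ^ 2 - r ^ 2) with hDydef
    have hDx0 : 0 ≤ Dx := by rw [hDxdef]; linarith
    have hDy0 : 0 ≤ Dy := by rw [hDydef]; linarith
    have hdiff : normp v ^ 2 * (tbval r x v - tbval r y v)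
        = Real.sqrt Dy - Real.sqrt Dx := by
      rw [tbval, tbval, ← hDxdef, ← hDydef, hd]
      field_simp
      ring
    have hLHS : normp v ^ 2 * |tbval r x v - tbval r y v|
        = |Real.sqrt Dy - Real.sqrt Dx| := by
      rw [← hdiff, abs_mul, abs_of_nonneg (by positivity : (0:ℝ) ≤ normp v ^ 2)]
    rw [hLHS]
    have h1 : |Real.sqrt Dy - Real.sqrt Dx| ≤ Real.sqrt |Dy - Dx| :=
      abs_sqrt_sub_sqrt_le Dy Dx hDy0 hDx0
    have h2 : |Dy - Dx| = normp v ^ 2 * |normp x ^ 2 - normp y ^ 2| := by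
      have hdd : Dy - Dx = normp v ^ 2 * (normp x ^ 2 - normp y ^ 2) := by
        rw [hDydef, hDxdef, hd]; ring
      rw [hdd, abs_mul, abs_of_nonneg (by positivity : (0:ℝ) ≤ normp v ^ 2)]
    have h3 : Real.sqrt |Dy - Dx| ≤ Real.sqrt (normp v ^ 2 * (2 * R * e)) := by
      apply Real.sqrt_le_sqrt
      rw [h2]
      exact mul_le_mul_of_nonneg_left hkey (by positivity)
    have h4 : Real.sqrt (normp v ^ 2 * (2 * R * e))
        = normp v * (Real.sqrt (2 * R) * Real.sqrt e) := by
      rw [Real.sqrt_mul (by positivity), Real.sqrt_sq hnvx,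
        Real.sqrt_mul (by linarith : (0:ℝ) ≤ 2 * R)]
    calc |Real.sqrt Dy - Real.sqrt Dx| ≤ Real.sqrt (normp v ^ 2 * (2 * R * e)) :=
          le_trans h1 h3
      _ = normp v * (Real.sqrt (2 * R) * Real.sqrt e) := h4
      _ ≤ (Real.sqrt (2 * R) + 1) * normp v * Real.sqrt e := by
          have := Real.sqrt_nonneg e
          nlinarith [Real.sqrt_nonneg (2 * R)]
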